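/- Let X be a separable complex Banach space, let k ≥ 1, and let T₁, …, T_k be bounded linear operators on X. If every T_i is disk transitive and at least k − 1 of the operators T₁, …, T_k are compound, then T₁ ⊕ … ⊕ T_k is k-bitransitive. -/

import Mathlib

open Filter Topology Set Pointwise

variable {X : Type*} [NormedAddCommGroup X] [NormedSpace ℂ X]

/-- `T` is compound: for all nonempty open `U, V` there are `N` and scalars `α n`
with `0 < ‖α n‖ ≤ 1` such that `T^n (α n • U) ∩ V ≠ ∅` for all `n ≥ N`. -/
def Compound (T : X →L[ℂ] X) : Prop :=
  ∀ U V : Set X, IsOpen U → U.Nonempty → IsOpen V → V.Nonempty →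
    ∃ N : ℕ, ∃ α : ℕ → ℂ, ∀ n ≥ N,
      (0 < ‖α n‖ ∧ ‖α n‖ ≤ 1) ∧ (((T ^ n) '' (α n • U)) ∩ V).Nonempty

/-- `T` is topologically mixing. -/
def TopologicallyMixing (T : X →L[ℂ] X) : Prop :=
  ∀ U V : Set X, IsOpen U → U.Nonempty → IsOpen V → V.Nonempty →
    ∃ N : ℕ, ∀ n ≥ N, (((T ^ n) '' U) ∩ V).Nonempty

/-- `T` is disk transitive. -/
def DiskTransitive (T : X →L[ℂ] X) : Prop :=
  ∀ U V : Set X, IsOpen U → U.Nonempty → IsOpen V → V.Nonempty →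
    ∃ n : ℕ, ∃ α : ℂ, 0 < ‖α‖ ∧ ‖α‖ ≤ 1 ∧ (((T ^ n) '' (α • U)) ∩ V).Nonempty

/-- The direct sum `T 0 ⊕ ⋯ ⊕ T (k-1)` is `k`-bitransitive: for all nonempty open
`U i, V i` there are `n` and scalars `α i` with `0 < ‖α i‖ ≤ 1` such that
`(T 0 ⊕ ⋯)^n (α 0 • U 0 ⊕ ⋯) ∩ (V 0 ⊕ ⋯) ≠ ∅`, stated componentwise (an
intersection of product sets is nonempty iff each componentwise intersection is). -/
def kBitransitive {k : ℕ} (T : Fin k → X →L[ℂ] X) : Prop :=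
  ∀ U V : Fin k → Set X,
    (∀ i, IsOpen (U i) ∧ (U i).Nonempty) →
    (∀ i, IsOpen (V i) ∧ (V i).Nonempty) →
    ∃ n : ℕ, ∃ α : Fin k → ℂ,
      (∀ i, 0 < ‖α i‖ ∧ ‖α i‖ ≤ 1) ∧
      ∀ i, (((T i ^ n) '' (α i • U i)) ∩ V i).Nonempty

/-- The cross set `C_T(A,B)`. -/
def crossSet (T : X →L[ℂ] X) (A B : Set X) : Set ℕ :=
  {n | ∃ α : ℂ, 0 < ‖α‖ ∧ ‖α‖ ≤ 1 ∧ (((T ^ n) '' (α • A)) ∩ B).Nonempty}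

/-- The junction set `J_T(A,B)`. -/
def junctionSet (T : X →L[ℂ] X) (A B : Set X) : Set (ℕ × ℂ) :=
  {p | 0 < ‖p.2‖ ∧ ‖p.2‖ ≤ 1 ∧ (((T ^ p.1) '' (p.2 • A)) ∩ B).Nonempty}

/-- A subset of `ℕ × ℂ` is bifinite if it contains `{(n, a n) : n ∈ K}` for some
cofinite `K ⊆ ℕ` and some sequence `a : ℕ → ℂ`. -/
def Bifinite (A : Set (ℕ × ℂ)) : Prop :=
  ∃ K : Set ℕ, Kᶜ.Finite ∧ ∃ a : ℕ → ℂ, ∀ n ∈ K, (n, a n) ∈ A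


lemma norm_pow_le_max {X : Type*} [NormedAddCommGroup X] [NormedSpace ℂ X]
    (T : X →L[ℂ] X) (m : ℕ) : ‖T ^ m‖ ≤ (max 1 ‖T‖) ^ m := by
  induction m with
  | zero => simpa [ContinuousLinearMap.one_def] using ContinuousLinearMap.norm_id_le
  | succ m ih =>
    calc ‖T ^ (m + 1)‖ = ‖T ^ m * T‖ := by rw [pow_succ]
      _ ≤ ‖T ^ m‖ * ‖T‖ := norm_mul_le _ _
      _ ≤ (max 1 ‖T‖) ^ m * max 1 ‖T‖ := by
          apply mul_le_mul ih (le_max_right _ _) (norm_nonneg _)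
          positivity
      _ = (max 1 ‖T‖) ^ (m + 1) := (pow_succ _ _).symm

lemma crossSet_large {X : Type*} [NormedAddCommGroup X] [NormedSpace ℂ X]
    (T : X →L[ℂ] X) (h : DiskTransitive T)
    (U V : Set X) (hU : IsOpen U) (hUn : U.Nonempty) (hV : IsOpen V) (hVn : V.Nonempty)
    (N : ℕ) :
    ∃ n, N ≤ n ∧ ∃ α : ℂ, 0 < ‖α‖ ∧ ‖α‖ ≤ 1 ∧ (((T ^ n) '' (α • U)) ∩ V).Nonempty := by
  by_cases hv : ∃ v ∈ V, v ≠ 0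
  · obtain ⟨v, hvV, hv0⟩ := hv
    obtain ⟨u₀, hu₀⟩ := hUn
    obtain ⟨δ, hδ, hball⟩ := Metric.isOpen_iff.mp hU u₀ hu₀
    have hvnorm : 0 < ‖v‖ := norm_pos_iff.mpr hv0
    set r : ℝ := ‖v‖ / 2 with hrdef
    have hr0 : 0 < r := by positivity
    set V' : Set X := V ∩ {x | r < ‖x‖} with hV'def
    have hV'open : IsOpen V' := hV.inter (isOpen_lt continuous_const continuous_norm)
    have hvV' : v ∈ V' := ⟨hvV, half_lt_self hvnorm⟩
    have hmax1 : (1 : ℝ) ≤ max 1 ‖T‖ := le_max_left _ _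
    have hmaxpos : (0 : ℝ) < max 1 ‖T‖ := lt_of_lt_of_le one_pos hmax1
    set M : ℝ := (max 1 ‖T‖) ^ N * (‖u₀‖ + δ) with hMdef
    have hM : 0 < M := by
      apply mul_pos (pow_pos hmaxpos N)
      have := norm_nonneg u₀
      linarith
    set ε : ℝ := min 1 (r / (2 * M)) with hεdef
    have hε0 : 0 < ε := lt_min one_pos (by positivity)
    have hε1 : ε ≤ 1 := min_le_left _ _
    have hεM : ε * M < r := by
      have h1 : ε * M ≤ (r / (2 * M)) * M := mul_le_mul_of_nonneg_right (min_le_right _ _) hM.le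
      have h2 : (r / (2 * M)) * M = r / 2 := by field_simp
      linarith [half_lt_self hr0]
    set c : ℂ := (ε : ℂ) with hcdef
    have hcnorm : ‖c‖ = ε := by
      rw [hcdef, Complex.norm_real, Real.norm_eq_abs, abs_of_pos hε0]
    have hc0 : c ≠ 0 := by
      simp only [hcdef, ne_eq, Complex.ofReal_eq_zero]
      exact hε0.ne'
    set U₀ : Set X := Metric.ball u₀ δ with hU₀def
    obtain ⟨n, α, hα0, hα1, y, hyim, hyV'⟩ :=
      h (c • U₀) V' (Metric.isOpen_ball.smul₀ hc0)
        ⟨c • u₀, Set.smul_mem_smul_set (Metric.mem_ball_self hδ)⟩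
        hV'open ⟨v, hvV'⟩
    obtain ⟨x, hx, rfl⟩ := hyim
    rw [smul_smul] at hx
    obtain ⟨u, huU₀, rfl⟩ := hx
    have hunorm : ‖u‖ < ‖u₀‖ + δ := by
      have : ‖u - u₀‖ < δ := mem_ball_iff_norm.mp huU₀
      calc ‖u‖ = ‖u₀ + (u - u₀)‖ := by congr 1; abel
        _ ≤ ‖u₀‖ + ‖u - u₀‖ := norm_add_le _ _
        _ < ‖u₀‖ + δ := by linarith
    have hαc : ‖α * c‖ = ‖α‖ * ε := by rw [norm_mul, hcnorm]
    have hn : N ≤ n := by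
      by_contra hlt
      push_neg at hlt
      have hbound : ‖(T ^ n) ((α * c) • u)‖ ≤ ε * M := by
        calc ‖(T ^ n) ((α * c) • u)‖ ≤ ‖T ^ n‖ * ‖(α * c) • u‖ :=
              (T ^ n).le_opNorm _
          _ ≤ (max 1 ‖T‖) ^ N * (ε * (‖u₀‖ + δ)) := by
              apply mul_le_mul
              · exact (norm_pow_le_max T n).trans
                  (pow_le_pow_right₀ hmax1 hlt.le)
              · rw [norm_smul, hαc]
                calc ‖α‖ * ε * ‖u‖ ≤ 1 * ε * (‖u₀‖ + δ) := by
                      apply mul_le_mul (mul_le_mul_of_nonneg_right hα1 hε0.le)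
                        hunorm.le (norm_nonneg _) (by positivity)
                  _ = ε * (‖u₀‖ + δ) := by ring
              · positivity
              · positivity
          _ = ε * M := by rw [hMdef]; ring
      have : r < ‖(T ^ n) ((α * c) • u)‖ := hyV'.2
      linarith
    refine ⟨n, hn, α * c, ?_, ?_, ⟨(T ^ n) ((α * c) • u), ⟨(α * c) • u,
      Set.smul_mem_smul_set (hball huU₀), rfl⟩, hyV'.1⟩⟩
    · rw [hαc]; positivity
    · rw [hαc]
      calc ‖α‖ * ε ≤ 1 * 1 := mul_le_mul hα1 hε1 hε0.le zero_le_one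
        _ = 1 := one_mul 1
  · push_neg at hv
    obtain ⟨v, hvV⟩ := hVn
    have hv0 : (0 : X) ∈ V := hv v hvV ▸ hvV
    obtain ⟨u₀, hu₀⟩ := hUn
    obtain ⟨ε, hε, hb⟩ := Metric.isOpen_iff.mp hV 0 hv0
    have hall : ∀ x : X, x = 0 := by
      intro x
      by_contra hx0
      have hxn : 0 < ‖x‖ := norm_pos_iff.mpr hx0
      set y : X := ((ε / 2 / ‖x‖ : ℝ) : ℂ) • x with hydef
      have hymem : y ∈ Metric.ball (0 : X) ε := by
        rw [Metric.mem_ball, dist_zero_right, hydef, norm_smul, Complex.norm_real,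
          Real.norm_eq_abs, abs_of_pos (by positivity)]
        rw [div_mul_cancel₀ _ hxn.ne']
        linarith
      have hy0 : y = 0 := hv y (hb hymem)
      rw [hydef, smul_eq_zero] at hy0
      rcases hy0 with hcase | hcase
      · rw [Complex.ofReal_eq_zero] at hcase
        have : (0 : ℝ) < ε / 2 / ‖x‖ := by positivity
        linarith [hcase ▸ this]
      · exact hx0 hcase
    refine ⟨N, le_refl N, 1, by simp, by simp, ⟨(T ^ N) ((1 : ℂ) • u₀),
      ⟨(1 : ℂ) • u₀, Set.smul_mem_smul_set hu₀, rfl⟩, ?_⟩⟩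
    rw [hall ((T ^ N) ((1 : ℂ) • u₀))]
    exact hv0

/-- if every component is disk transitive and at least `k - 1` of the
components are compound, then the direct sum is `k`-bitransitive. -/
theorem kBitransitive_of_diskTransitive_of_compound
    {X : Type*} [NormedAddCommGroup X] [NormedSpace ℂ X] [CompleteSpace X]
    [TopologicalSpace.SeparableSpace X]
    {k : ℕ} (hk : 1 ≤ k) (T : Fin k → X →L[ℂ] X)
    (hDT : ∀ i, DiskTransitive (T i))
    (hC : ∃ j : Fin k, ∀ i, i ≠ j → Compound (T i)) :
    kBitransitive T := by
  intro U V hU hV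
  obtain ⟨j, hj⟩ := hC
  have key : ∀ i : Fin k, ∃ N : ℕ, ∃ a : ℕ → ℂ, i ≠ j →
      ∀ n ≥ N, (0 < ‖a n‖ ∧ ‖a n‖ ≤ 1) ∧ (((T i ^ n) '' (a n • U i)) ∩ V i).Nonempty := by
    intro i
    by_cases hij : i = j
    · exact ⟨0, fun _ => 1, fun h => absurd hij h⟩
    · obtain ⟨N, a, ha⟩ := hj i hij (U i) (V i) (hU i).1 (hU i).2 (hV i).1 (hV i).2
      exact ⟨N, a, fun _ => ha⟩
  choose Ns A hA using key
  obtain ⟨n, hn, αj, hαj0, hαj1, hαjne⟩ :=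
    crossSet_large (T j) (hDT j) (U j) (V j) (hU j).1 (hU j).2 (hV j).1 (hV j).2
      (Finset.univ.sup Ns)
  refine ⟨n, fun i => if i = j then αj else A i n, ?_, ?_⟩
  · intro i
    by_cases hij : i = j
    · simp only [hij, if_pos rfl]
      exact ⟨hαj0, hαj1⟩
    · simp only [if_neg hij]
      exact (hA i hij n (le_trans (Finset.le_sup (Finset.mem_univ i)) hn)).1
  · intro i
    by_cases hij : i = j
    · subst hij
      simpa only [if_pos rfl, if_pos trivial] using hαjne
    · simp only [if_neg hij]
      exact (hA i hij n (le_trans (Finset.le_sup (Finset.mem_univ i)) hn)).2
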